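/- Let n ∈ ℕ with ℓ_n^- = ℓ_n^+ and set f = ℓ~_n. Then every x ∈ ℤ with m₋(f) < x < m₊(f) and f(x) = 0 satisfies min(0, X_n) < x < max(0, X_n); consequently X_n ∈ I(f). -/
import Mathlib


open MeasureTheory Filter

/-- Initial local time: edge `i` denotes the half-integer edge `i + 1/2`
joining `i` and `i+1`; `aInit i = a(i + 1/2)`, which is `0` if `|i+1/2| - 1/2`
is even and `-1` if it is odd. -/
def aInit (i : ℤ) : ℤ := if Even (if 0 ≤ i then i else -i - 1) then 0 else -1

/-- State of the self-repelling walk: current position, edge local times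
(`loc i` is the local time of the edge joining `i` and `i+1`, i.e. of the
half-integer edge `i + 1/2`), and the number of coins used so far. -/
structure SRWState where
  pos : ℤ
  loc : ℤ → ℤ
  coins : ℕ

/-- One step of the self-repelling walk driven by the coin sequence `ε`. -/
def srwStep (ε : ℕ → ℤ) (s : SRWState) : SRWState :=
  let lm := s.loc (s.pos - 1)   -- ℓ_n⁻ = ℓ_n(X_n - 1/2)
  let lp := s.loc s.pos         -- ℓ_n⁺ = ℓ_n(X_n + 1/2)
  let next : ℤ := if lp < lm then s.pos + 1
    else if lm < lp then s.pos - 1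
    else s.pos + ε s.coins
  { pos := next
    loc := fun i => if i = min s.pos next then s.loc i + 1 else s.loc i
    coins := if lm = lp then s.coins + 1 else s.coins }

/-- The self-repelling walk: state after `n` steps. -/
def srw (ε : ℕ → ℤ) : ℕ → SRWState
  | 0 => ⟨0, aInit, 0⟩
  | n + 1 => srwStep ε (srw ε n)

/-- Position `X_n` of the self-repelling walk. -/
def Xwalk (ε : ℕ → ℤ) (n : ℕ) : ℤ := (srw ε n).pos

/-- Edge local time `ℓ_n(i + 1/2)`. -/
def ellEdge (ε : ℕ → ℤ) (n : ℕ) (i : ℤ) : ℤ := (srw ε n).loc i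

/-- `ℓ_n⁻ = ℓ_n(X_n - 1/2)`. -/
def ellMinus (ε : ℕ → ℤ) (n : ℕ) : ℤ := ellEdge ε n (Xwalk ε n - 1)

/-- `ℓ_n⁺ = ℓ_n(X_n + 1/2)`. -/
def ellPlus (ε : ℕ → ℤ) (n : ℕ) : ℤ := ellEdge ε n (Xwalk ε n)

/-- `n` is an equality time: `ℓ_n⁻ = ℓ_n⁺`. -/
def IsEqTime (ε : ℕ → ℤ) (n : ℕ) : Prop := ellMinus ε n = ellPlus ε n

/-- `N(k)`: the `(k+1)`-st smallest equality time. -/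
noncomputable def timeN (ε : ℕ → ℤ) (k : ℕ) : ℕ := Nat.nth (IsEqTime ε) k

/-- `H_n = (ℓ_n⁻ + ℓ_n⁺)/2`. -/
def Hheight (ε : ℕ → ℤ) (n : ℕ) : ℤ := (ellMinus ε n + ellPlus ε n) / 2

/-- `ã(x)`: `0` for even `x`, `-1` for odd `x`. -/
def aTilde (x : ℤ) : ℤ := if Even x then 0 else -1

/-- Modified local time `ℓ~_n(x)`: equals `ℓ_n(x - 1/2)` for `x ≤ X_n` and
`ℓ_n(x + 1/2)` for `x > X_n`. -/
def modLoc (ε : ℕ → ℤ) (n : ℕ) (x : ℤ) : ℤ :=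
  if x ≤ Xwalk ε n then ellEdge ε n (x - 1) else ellEdge ε n x

/-- Area `𝒜(f) = Σ_x (f(x) - ã(x))` between `f` and `ã`. -/
noncomputable def areaA (f : ℤ → ℤ) : ℤ := ∑ᶠ x : ℤ, (f x - aTilde x)

/-- `m₋(f) = 1 + max {x ≤ 0 : f x = -1}`. -/
noncomputable def mMinus (f : ℤ → ℤ) : ℤ := 1 + sSup {x : ℤ | x ≤ 0 ∧ f x = -1}

/-- `m₊(f) = -1 + min {x ≥ 0 : f x = -1}`. -/
noncomputable def mPlus (f : ℤ → ℤ) : ℤ := -1 + sInf {x : ℤ | 0 ≤ x ∧ f x = -1}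

/-- `O(f)`: the number of zeros of `f` strictly between `m₋(f)` and `m₊(f)`. -/
noncomputable def nZeros (f : ℤ → ℤ) : ℕ :=
  {x : ℤ | mMinus f < x ∧ x < mPlus f ∧ f x = 0}.ncard

/-- `o₊ = max {x < m₊(f) : f x = 0}`. -/
noncomputable def oPlus (f : ℤ → ℤ) : ℤ := sSup {x : ℤ | x < mPlus f ∧ f x = 0}

/-- `o₋ = min {x > m₋(f) : f x = 0}`. -/
noncomputable def oMinus (f : ℤ → ℤ) : ℤ := sInf {x : ℤ | mMinus f < x ∧ f x = 0}

open Classical in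
/-- The admissible interval `I(f)`. -/
noncomputable def interI (f : ℤ → ℤ) : Set ℤ :=
  if f = aTilde then {0}
  else if nZeros f = 0 then Set.Icc (mMinus f) (mPlus f)
  else if 0 < oPlus f then Set.Ioc (oPlus f) (mPlus f)
  else Set.Ico (mMinus f) (oMinus f)

/-- Coins as `±1`-valued integers from booleans. -/
def coin (ω : ℕ → Bool) (j : ℕ) : ℤ := if ω j then 1 else -1



lemma aInit_negval {i : ℤ} (h : i < 0) : aInit i = if i % 2 = 0 then -1 else 0 := by
  unfold aInit
  simp only [if_neg (show ¬ (0 ≤ i) by omega)]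
  have h2 : Even (-i - 1) ↔ ¬ (i % 2 = 0) := by
    rw [Int.even_iff]; omega
  by_cases hE : i % 2 = 0 <;> simp [h2, hE]

lemma aInit_posval {i : ℤ} (h : 0 ≤ i) : aInit i = if i % 2 = 0 then 0 else -1 := by
  unfold aInit
  simp only [if_pos h]
  have h2 : Even i ↔ i % 2 = 0 := Int.even_iff
  by_cases hE : i % 2 = 0 <;> simp [h2, hE]

lemma aInit_ge (i : ℤ) : -1 ≤ aInit i := by
  unfold aInit; split <;> omega

lemma aInit_spec (i : ℤ) :
    (i < 0 ∧ i % 2 = 0 ∧ aInit i = -1) ∨ (i < 0 ∧ i % 2 = 1 ∧ aInit i = 0) ∨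
    (0 ≤ i ∧ i % 2 = 0 ∧ aInit i = 0) ∨ (0 ≤ i ∧ i % 2 = 1 ∧ aInit i = -1) := by
  rcases lt_or_ge i 0 with h | h
  · rcases (by omega : i % 2 = 0 ∨ i % 2 = 1) with hp | hp
    · exact Or.inl ⟨h, hp, by rw [aInit_negval h, if_pos hp]⟩
    · exact Or.inr (Or.inl ⟨h, hp, by rw [aInit_negval h, if_neg (by omega)]⟩)
  · rcases (by omega : i % 2 = 0 ∨ i % 2 = 1) with hp | hp
    · exact Or.inr (Or.inr (Or.inl ⟨h, hp, by rw [aInit_posval h, if_pos hp]⟩))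
    · exact Or.inr (Or.inr (Or.inr ⟨h, hp, by rw [aInit_posval h, if_neg (by omega)]⟩))

lemma aTilde_val (x : ℤ) : aTilde x = if x % 2 = 0 then 0 else -1 := by
  unfold aTilde
  have h2 : Even x ↔ x % 2 = 0 := Int.even_iff
  by_cases hE : x % 2 = 0 <;> simp [h2, hE]

def SRWInv (L : ℤ → ℤ) (X lo hi : ℤ) : Prop :=
  lo ≤ X ∧ X ≤ hi ∧ lo ≤ 0 ∧ 0 ≤ hi ∧
  (∀ i, i < lo → L i = aInit i) ∧
  (∀ i, hi ≤ i → L i = aInit i) ∧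
  (∀ i, lo ≤ i → i < hi → 0 ≤ L i) ∧
  (∀ i, lo ≤ i → i < min 0 X → 1 ≤ L i) ∧
  (∀ i, max 0 X ≤ i → i < hi → 1 ≤ L i)

lemma srwinv_aux {L : ℤ → ℤ} {X lo hi : ℤ} (h : SRWInv L X lo hi) {X' lo' hi' : ℤ}
    (hX : X' = X + 1 ∧ lo' = lo ∧ hi' = max hi X' ∨
          X' = X - 1 ∧ lo' = min lo X' ∧ hi' = hi) :
    SRWInv (fun i => if i = min X X' then L i + 1 else L i) X' lo' hi' := by
  obtain ⟨h1, h2, h3, h4, hJ1, hJ2, hJ3, hJ4, hJ5⟩ := h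
  have hmin0X : min 0 X = if X ≤ 0 then X else 0 := by
    rcases min_cases 0 X with ⟨e, c⟩ | ⟨e, c⟩ <;> rw [e] <;> split_ifs <;> omega
  have hmax0X : max 0 X = if 0 ≤ X then X else 0 := by
    rcases max_cases 0 X with ⟨e, c⟩ | ⟨e, c⟩ <;> rw [e] <;> split_ifs <;> omega
  rcases hX with ⟨hX, hlo, hhi⟩ | ⟨hX, hlo, hhi⟩
  · -- right move, increment edge index X
    have hm : min X X' = X := by rw [min_eq_left (by omega)]
    have hhi2 : hi' = if X' ≤ hi then hi else X' := by
      rw [hhi]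
      rcases max_cases hi X' with ⟨e, c⟩ | ⟨e, c⟩ <;> rw [e] <;> split_ifs <;> omega
    have hmin' : min 0 X' = if X' ≤ 0 then X' else 0 := by
      rcases min_cases 0 X' with ⟨e, c⟩ | ⟨e, c⟩ <;> rw [e] <;> split_ifs <;> omega
    have hmax' : max 0 X' = if 0 ≤ X' then X' else 0 := by
      rcases max_cases 0 X' with ⟨e, c⟩ | ⟨e, c⟩ <;> rw [e] <;> split_ifs <;> omega
    refine ⟨by omega, by split_ifs at hhi2 <;> omega, by omega, by split_ifs at hhi2 <;> omega,
      ?_, ?_, ?_, ?_, ?_⟩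
    · intro i hA
      have hiX : ¬ (i = X) := by omega
      simp only [hm, hiX, if_false]
      exact hJ1 i (by omega)
    · intro i hA
      have hiX : ¬ (i = X) := by split_ifs at hhi2 <;> omega
      simp only [hm, hiX, if_false]
      exact hJ2 i (by split_ifs at hhi2 <;> omega)
    · intro i hA hB
      simp only [hm]
      by_cases hiX : i = X
      · rw [if_pos hiX]
        rcases lt_or_ge i hi with hc | hc
        · have := hJ3 i (by omega) hc; omega
        · have := hJ2 i hc; have := aInit_ge i; omega
      · rw [if_neg hiX]
        refine hJ3 i (by omega) ?_
        split_ifs at hhi2 <;> omega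
    · intro i hA hB
      rw [hmin'] at hB
      simp only [hm]
      by_cases hiX : i = X
      · rw [if_pos hiX]
        have := hJ3 i (by omega) (by split_ifs at hB <;> omega)
        omega
      · rw [if_neg hiX]
        refine hJ4 i (by omega) ?_
        rw [hmin0X]
        split_ifs at hB ⊢ <;> omega
    · intro i hA hB
      rw [hmax'] at hA
      have hiX : ¬ (i = X) := by split_ifs at hA <;> omega
      simp only [hm, hiX, if_false]
      refine hJ5 i ?_ ?_
      · rw [hmax0X]; split_ifs at hA ⊢ <;> omega
      · split_ifs at hhi2 hA <;> omega
  · -- left move, increment edge index X - 1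
    have hm : min X X' = X - 1 := by rw [hX, min_eq_right (by omega)]
    have hlo2 : lo' = if lo ≤ X' then lo else X' := by
      rw [hlo]
      rcases min_cases lo X' with ⟨e, c⟩ | ⟨e, c⟩ <;> rw [e] <;> split_ifs <;> omega
    have hmin' : min 0 X' = if X' ≤ 0 then X' else 0 := by
      rcases min_cases 0 X' with ⟨e, c⟩ | ⟨e, c⟩ <;> rw [e] <;> split_ifs <;> omega
    have hmax' : max 0 X' = if 0 ≤ X' then X' else 0 := by
      rcases max_cases 0 X' with ⟨e, c⟩ | ⟨e, c⟩ <;> rw [e] <;> split_ifs <;> omega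
    refine ⟨by split_ifs at hlo2 <;> omega, by omega, by split_ifs at hlo2 <;> omega, by omega,
      ?_, ?_, ?_, ?_, ?_⟩
    · intro i hA
      have hiX : ¬ (i = X - 1) := by split_ifs at hlo2 <;> omega
      simp only [hm, hiX, if_false]
      exact hJ1 i (by split_ifs at hlo2 <;> omega)
    · intro i hA
      have hiX : ¬ (i = X - 1) := by omega
      simp only [hm, hiX, if_false]
      exact hJ2 i (by omega)
    · intro i hA hB
      simp only [hm]
      by_cases hiX : i = X - 1
      · rw [if_pos hiX]
        rcases le_or_gt lo i with hc | hc
        · have := hJ3 i hc (by omega); omega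
        · have := hJ1 i hc; have := aInit_ge i; omega
      · rw [if_neg hiX]
        refine hJ3 i ?_ (by omega)
        split_ifs at hlo2 <;> omega
    · intro i hA hB
      rw [hmin'] at hB
      have hiX : ¬ (i = X - 1) := by split_ifs at hB <;> omega
      simp only [hm, hiX, if_false]
      refine hJ4 i ?_ ?_
      · split_ifs at hlo2 hB <;> omega
      · rw [hmin0X]; split_ifs at hB ⊢ <;> omega
    · intro i hA hB
      rw [hmax'] at hA
      simp only [hm]
      by_cases hiX : i = X - 1
      · rw [if_pos hiX]
        have := hJ3 i (by split_ifs at hA <;> omega) (by omega)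
        omega
      · rw [if_neg hiX]
        refine hJ5 i ?_ (by omega)
        rw [hmax0X]; split_ifs at hA ⊢ <;> omega

lemma srw_pos_succ (ε : ℕ → ℤ) (hε : ∀ j, ε j = 1 ∨ ε j = -1) (n : ℕ) :
    (srw ε (n+1)).pos = (srw ε n).pos + 1 ∨ (srw ε (n+1)).pos = (srw ε n).pos - 1 := by
  have e : (srw ε (n+1)).pos =
      (if (srw ε n).loc (srw ε n).pos < (srw ε n).loc ((srw ε n).pos - 1)
        then (srw ε n).pos + 1
        else if (srw ε n).loc ((srw ε n).pos - 1) < (srw ε n).loc (srw ε n).pos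
          then (srw ε n).pos - 1
          else (srw ε n).pos + ε (srw ε n).coins) := rfl
  rw [e]
  split_ifs with hA hB
  · exact Or.inl rfl
  · exact Or.inr rfl
  · rcases hε (srw ε n).coins with h | h
    · rw [h]; exact Or.inl rfl
    · rw [h]; right; ring

lemma srw_loc_succ (ε : ℕ → ℤ) (n : ℕ) :
    (srw ε (n+1)).loc = fun i =>
      if i = min (srw ε n).pos (srw ε (n+1)).pos then (srw ε n).loc i + 1
      else (srw ε n).loc i := rfl

lemma srw_exists_inv (ε : ℕ → ℤ) (hε : ∀ j, ε j = 1 ∨ ε j = -1) :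
    ∀ n, ∃ lo hi, SRWInv (srw ε n).loc (srw ε n).pos lo hi := by
  intro n
  induction n with
  | zero =>
    refine ⟨0, 0, ?_⟩
    show SRWInv aInit 0 0 0
    exact ⟨le_refl _, le_refl _, le_refl _, le_refl _, fun i _ => rfl, fun i _ => rfl,
      fun i hA hB => by omega, fun i hA hB => by omega, fun i hA hB => by omega⟩
  | succ n ih =>
    obtain ⟨lo, hi, h⟩ := ih
    rcases srw_pos_succ ε hε n with hp | hp
    · refine ⟨lo, max hi (srw ε (n+1)).pos, ?_⟩
      rw [srw_loc_succ ε n]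
      exact srwinv_aux h (Or.inl ⟨hp, rfl, rfl⟩)
    · refine ⟨min lo (srw ε (n+1)).pos, hi, ?_⟩
      rw [srw_loc_succ ε n]
      exact srwinv_aux h (Or.inr ⟨hp, rfl, rfl⟩)

lemma statement9_aux (f L : ℤ → ℤ) (X lo hi : ℤ)
    (hInv : SRWInv L X lo hi)
    (hEq : L (X - 1) = L X)
    (hf : ∀ x, f x = if x ≤ X then L (x - 1) else L x) :
    (∀ x : ℤ, mMinus f < x → x < mPlus f → f x = 0 →
      min 0 X < x ∧ x < max 0 X) ∧ X ∈ interI f := by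
  obtain ⟨h1, h2, h3, h4, hJ1, hJ2, hJ3, hJ4, hJ5⟩ := hInv
  have hfle : ∀ x : ℤ, x ≤ X → f x = L (x - 1) := fun x hx => by rw [hf x, if_pos hx]
  have hfgt : ∀ x : ℤ, X < x → f x = L x := fun x hx => by rw [hf x, if_neg (by omega)]
  have hmmS : mMinus f = 1 + sSup {x : ℤ | x ≤ 0 ∧ f x = -1} := rfl
  have hmpT : mPlus f = -1 + sInf {x : ℤ | 0 ≤ x ∧ f x = -1} := rfl
  have hSbdd : BddAbove {x : ℤ | x ≤ 0 ∧ f x = -1} := ⟨0, fun x hx => hx.1⟩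
  have hTbdd : BddBelow {x : ℤ | 0 ≤ x ∧ f x = -1} := ⟨0, fun x hx => hx.1⟩
  -- far-left elements of S
  have hSfar : ∀ x : ℤ, x ≤ lo → x % 2 = 1 → x ≤ 0 ∧ f x = -1 := by
    intro x hx hpar
    refine ⟨by omega, ?_⟩
    rw [hfle x (by omega), hJ1 (x - 1) (by omega)]
    rcases aInit_spec (x - 1) with h | h | h | h <;> omega
  have hSne : {x : ℤ | x ≤ 0 ∧ f x = -1}.Nonempty := by
    rcases (by omega : lo % 2 = 1 ∨ lo % 2 = 0) with h | h
    · exact ⟨lo, hSfar lo le_rfl h⟩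
    · exact ⟨lo - 1, hSfar (lo - 1) (by omega) (by omega)⟩
  -- far-right elements of T
  have hTfar : ∀ x : ℤ, hi ≤ x → X + 1 ≤ x → x % 2 = 1 → 0 ≤ x ∧ f x = -1 := by
    intro x hx hx2 hpar
    refine ⟨by omega, ?_⟩
    rw [hfgt x (by omega), hJ2 x hx]
    rcases aInit_spec x with h | h | h | h <;> omega
  have hTne : {x : ℤ | 0 ≤ x ∧ f x = -1}.Nonempty := by
    have hb1 : hi ≤ max hi (X + 1) := le_max_left _ _
    have hb2 : X + 1 ≤ max hi (X + 1) := le_max_right _ _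
    rcases (by omega : (max hi (X + 1)) % 2 = 1 ∨ (max hi (X + 1)) % 2 = 0) with h | h
    · exact ⟨max hi (X + 1), hTfar _ hb1 hb2 h⟩
    · exact ⟨max hi (X + 1) + 1, hTfar _ (by omega) (by omega) (by omega)⟩
  -- all elements of S are < X
  have hSlt : ∀ x ∈ {x : ℤ | x ≤ 0 ∧ f x = -1}, x ≤ X - 1 := by
    rintro x ⟨hx0, hfx⟩
    by_contra hcon
    push_neg at hcon
    rcases eq_or_lt_of_le (by omega : X ≤ x) with hc | hc
    · have hEq' : L (x - 1) = L x := by rw [← hc]; exact hEq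
      rw [hfle x (by omega)] at hfx
      rcases le_or_gt lo (x - 1) with hd | hd
      · have := hJ3 (x - 1) hd (by omega); omega
      · rw [hEq'] at hfx
        rcases lt_or_ge x hi with he | he
        · have := hJ3 x (by omega) he; omega
        · have := hJ2 x he
          rcases aInit_spec x with h | h | h | h <;> omega
    · rw [hfgt x hc] at hfx
      rcases lt_or_ge x hi with he | he
      · have := hJ3 x (by omega) he; omega
      · have := hJ2 x he
        rcases aInit_spec x with h | h | h | h <;> omega
  -- all elements of T are > X
  have hTgt : ∀ x ∈ {x : ℤ | 0 ≤ x ∧ f x = -1}, X + 1 ≤ x := by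
    rintro x ⟨hx0, hfx⟩
    by_contra hcon
    push_neg at hcon
    rw [hfle x (by omega)] at hfx
    rcases le_or_gt lo (x - 1) with hd | hd
    · have := hJ3 (x - 1) hd (by omega); omega
    · have := hJ1 (x - 1) hd
      rcases aInit_spec (x - 1) with h | h | h | h <;> omega
  have hmmle : mMinus f ≤ X := by
    have := csSup_le hSne hSlt; omega
  have hmpge : X ≤ mPlus f := by
    have := le_csInf hTne hTgt; omega
  -- f 0 ≠ -1
  have hf0 : f 0 ≠ -1 := by
    rcases le_or_gt 0 X with hx | hx
    · rw [hfle 0 hx]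
      rcases le_or_gt lo (0 - 1) with hc | hc
      · have := hJ3 (0 - 1) hc (by omega); omega
      · have := hJ1 (0 - 1) hc
        rcases aInit_spec (0 - 1) with h | h | h | h <;> omega
    · rw [hfgt 0 hx]
      rcases lt_or_ge 0 hi with hc | hc
      · have := hJ3 0 (by omega) hc; omega
      · have := hJ2 0 (by omega)
        rcases aInit_spec 0 with h | h | h | h <;> omega
  have hmm0 : mMinus f ≤ 0 := by
    have : ∀ x ∈ {x : ℤ | x ≤ 0 ∧ f x = -1}, x ≤ -1 := by
      rintro x ⟨hx0, hfx⟩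
      rcases eq_or_lt_of_le hx0 with hc | hc
      · exact absurd (hc ▸ hfx) hf0
      · omega
    have := csSup_le hSne this; omega
  have hmp0 : 0 ≤ mPlus f := by
    have : ∀ x ∈ {x : ℤ | 0 ≤ x ∧ f x = -1}, 1 ≤ x := by
      rintro x ⟨hx0, hfx⟩
      rcases eq_or_lt_of_le hx0 with hc | hc
      · exact absurd (hc ▸ hfx) hf0
      · omega
    have := le_csInf hTne this; omega
  -- MAIN PART 1
  have hP1 : ∀ x : ℤ, mMinus f < x → x < mPlus f → f x = 0 →
      min 0 X < x ∧ x < max 0 X := by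
    intro x hmmx hxmp hfx
    constructor
    · by_contra hcon
      push_neg at hcon
      have hx0 : x ≤ 0 := by omega
      have hxX : x ≤ X := by omega
      rw [hfle x hxX] at hfx
      rcases le_or_gt lo (x - 1) with hc | hc
      · have := hJ4 (x - 1) hc (by omega); omega
      · -- x ≤ lo : x must be even, then x-1 ∈ S gives mMinus f ≥ x
        have hv := hJ1 (x - 1) hc
        have hxeven : x % 2 = 0 := by
          rcases aInit_spec (x - 1) with h | h | h | h <;> omega
        have hmem : (x - 1) ∈ {x : ℤ | x ≤ 0 ∧ f x = -1} := by
          refine ⟨by omega, ?_⟩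
          rw [hfle (x - 1) (by omega), hJ1 (x - 1 - 1) (by omega)]
          rcases aInit_spec (x - 1 - 1) with h | h | h | h <;> omega
        have := le_csSup hSbdd hmem
        omega
    · by_contra hcon
      push_neg at hcon
      have hx0 : 0 ≤ x := by omega
      rcases eq_or_lt_of_le (by omega : X ≤ x) with hc | hc
      · -- x = X
        have hEq' : L (x - 1) = L x := by rw [← hc]; exact hEq
        rw [hfle x (by omega), hEq'] at hfx
        rcases lt_or_ge x hi with hd | hd
        · have := hJ5 x (by omega) hd; omega
        · have hv := hJ2 x hd
          have hxeven : x % 2 = 0 := by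
            rcases aInit_spec x with h | h | h | h <;> omega
          have hmem : (x + 1) ∈ {x : ℤ | 0 ≤ x ∧ f x = -1} := by
            refine ⟨by omega, ?_⟩
            rw [hfgt (x + 1) (by omega), hJ2 (x + 1) (by omega)]
            rcases aInit_spec (x + 1) with h | h | h | h <;> omega
          have := csInf_le hTbdd hmem
          omega
      · -- X < x
        rw [hfgt x hc] at hfx
        rcases lt_or_ge x hi with hd | hd
        · have := hJ5 x (by omega) hd; omega
        · have hv := hJ2 x hd
          have hxeven : x % 2 = 0 := by
            rcases aInit_spec x with h | h | h | h <;> omega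
          have hmem : (x + 1) ∈ {x : ℤ | 0 ≤ x ∧ f x = -1} := by
            refine ⟨by omega, ?_⟩
            rw [hfgt (x + 1) (by omega), hJ2 (x + 1) (by omega)]
            rcases aInit_spec (x + 1) with h | h | h | h <;> omega
          have := csInf_le hTbdd hmem
          omega
  refine ⟨hP1, ?_⟩
  -- MAIN PART 2
  unfold interI
  split_ifs with hfa hz hop
  · -- f = aTilde : show X = 0
    have hX0 : X = 0 := by
      by_contra hcon
      rcases lt_trichotomy X 0 with hs | hs | hs
      · rcases (by omega : X % 2 = 1 ∨ X % 2 = 0) with hp | hp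
        · have hfX : f X = aTilde X := by rw [hfa]
          rw [hfle X le_rfl, hEq, aTilde_val X, if_neg (by omega)] at hfX
          have := hJ3 X h1 (by omega); omega
        · have hfX : f (X + 1) = aTilde (X + 1) := by rw [hfa]
          rw [hfgt (X + 1) (by omega), aTilde_val (X + 1), if_neg (by omega)] at hfX
          have := hJ3 (X + 1) (by omega) (by omega); omega
      · exact hcon hs
      · rcases (by omega : X % 2 = 1 ∨ X % 2 = 0) with hp | hp
        · have hfX : f X = aTilde X := by rw [hfa]
          rw [hfle X le_rfl, aTilde_val X, if_neg (by omega)] at hfX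
          have := hJ3 (X - 1) (by omega) (by omega); omega
        · have hfX : f (X - 1) = aTilde (X - 1) := by rw [hfa]
          rw [hfle (X - 1) (by omega), aTilde_val (X - 1), if_neg (by omega)] at hfX
          have := hJ3 (X - 1 - 1) (by omega) (by omega); omega
    rw [hX0]; rfl
  · exact Set.mem_Icc.mpr ⟨hmmle, hmpge⟩
  all_goals {
    -- nZeros f ≠ 0 : extract an internal zero
    obtain ⟨z, hz'⟩ := Set.nonempty_of_ncard_ne_zero hz
    obtain ⟨hzmm, hzmp, hzf⟩ := hz'
    have hzP := hP1 z hzmm hzmp hzf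
    rcases lt_trichotomy X 0 with hXs | hXs | hXs
    · -- X < 0 : show oPlus f ≤ -1
      have hzU : z ∈ {x : ℤ | x < mPlus f ∧ f x = 0} := ⟨hzmp, hzf⟩
      have hopneg : oPlus f ≤ -1 := by
        have hb : ∀ x ∈ {x : ℤ | x < mPlus f ∧ f x = 0}, x ≤ -1 := by
          rintro x ⟨hxm, hxf⟩
          by_contra hc
          push_neg at hc
          rcases lt_or_ge (mMinus f) x with hd | hd
          · have := hP1 x hd hxm hxf; omega
          · -- x = 0, mMinus f = 0, 0 < mPlus f
            have hx0 : x = 0 := by omega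
            subst hx0
            have hf1 : f 1 ≠ -1 := by
              intro hcon2
              have := csInf_le hTbdd (⟨by omega, hcon2⟩ :
                (1 : ℤ) ∈ {x : ℤ | 0 ≤ x ∧ f x = -1})
              omega
            rw [hfgt 1 (by omega)] at hf1
            have hhi2 : 2 ≤ hi := by
              by_contra hcc
              push_neg at hcc
              have := hJ2 1 (by omega)
              rcases aInit_spec 1 with h | h | h | h <;> omega
            have := hJ5 0 (by omega) (by omega)
            rw [hfgt 0 (by omega)] at hxf
            omega
        have := csSup_le ⟨z, hzU⟩ hb
        have he : oPlus f = sSup {x : ℤ | x < mPlus f ∧ f x = 0} := rfl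
        omega
      first
      | (exact absurd hop (by omega))
      | (refine Set.mem_Ico.mpr ⟨hmmle, ?_⟩
         have hb : ∀ x ∈ {x : ℤ | mMinus f < x ∧ f x = 0}, X + 1 ≤ x := by
           rintro x ⟨hxm, hxf⟩
           rcases lt_or_ge x (mPlus f) with hd | hd
           · have := hP1 x hxm hd hxf; omega
           · omega
         have := le_csInf (⟨z, ⟨hzmm, hzf⟩⟩ : Set.Nonempty {x : ℤ | mMinus f < x ∧ f x = 0}) hb
         have he : oMinus f = sInf {x : ℤ | mMinus f < x ∧ f x = 0} := rfl
         omega)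
    · omega
    · -- X > 0
      have hzU : z ∈ {x : ℤ | x < mPlus f ∧ f x = 0} := ⟨hzmp, hzf⟩
      have hUbdd : BddAbove {x : ℤ | x < mPlus f ∧ f x = 0} := ⟨mPlus f, fun x hx => hx.1.le⟩
      have h0op : 0 < oPlus f := by
        have := le_csSup hUbdd hzU
        have he : oPlus f = sSup {x : ℤ | x < mPlus f ∧ f x = 0} := rfl
        omega
      have hopX : oPlus f < X := by
        have hb : ∀ x ∈ {x : ℤ | x < mPlus f ∧ f x = 0}, x ≤ X - 1 := by
          rintro x ⟨hxm, hxf⟩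
          rcases le_or_gt x (mMinus f) with hd | hd
          · omega
          · have := hP1 x hd hxm hxf; omega
        have := csSup_le ⟨z, hzU⟩ hb
        have he : oPlus f = sSup {x : ℤ | x < mPlus f ∧ f x = 0} := rfl
        omega
      first
      | (exact Set.mem_Ioc.mpr ⟨hopX, hmpge⟩)
      | (exact absurd h0op hop) }

/-- at an equality time `n` with `f = ℓ~_n`, every internal zero
of `f` lies strictly between `0` and `X_n`; consequently `X_n ∈ I(f)`. -/
theorem statement9 (ε : ℕ → ℤ) (hε : ∀ j, ε j = 1 ∨ ε j = -1) (n : ℕ)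
    (heq : IsEqTime ε n) :
    (∀ x : ℤ, mMinus (modLoc ε n) < x → x < mPlus (modLoc ε n) →
        modLoc ε n x = 0 →
        min 0 (Xwalk ε n) < x ∧ x < max 0 (Xwalk ε n)) ∧
      Xwalk ε n ∈ interI (modLoc ε n) := by
  obtain ⟨lo, hi, hInv⟩ := srw_exists_inv ε hε n
  exact statement9_aux (modLoc ε n) (srw ε n).loc (Xwalk ε n) lo hi hInv heq (fun x => rfl)
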